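/- For any e* ∈ E, the threshold policy d_{e*} satisfies Ẽ_{d_{e*}} = [0, e*] ∪ {ē}; it is admissible, and its equilibrium emission scheme is given by γ_{d_{e*}}(θ) = min(ê(θ), e*) for every θ ∈ Θ with e̲(θ) ≤ e*, and γ_{d_{e*}}(θ) = ē for every θ ∈ Θ with e̲(θ) > e*. -/

import Mathlib

open Set MeasureTheory

noncomputable section

/-- The set of belief-compatible emission levels under disclosure policy `d`,
on the emission space `E = [0, ebar]`. -/
def BCset (ebar : ℝ) (d : ℝ → ℝ) : Set ℝ :=
  {e | e ∈ Icc 0 ebar ∧ ∀ e' ∈ Icc 0 ebar, d e' = d e → e' ≤ e}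

/-- `d` is more transparent than `d'`: the fibers of `d` refine those of `d'`. -/
def MoreTransparent (ebar : ℝ) (d d' : ℝ → ℝ) : Prop :=
  ∀ e₁ ∈ Icc (0:ℝ) ebar, ∀ e₂ ∈ Icc (0:ℝ) ebar, d e₁ = d e₂ → d' e₁ = d' e₂

/-- A policy is admissible if for every type `θ ∈ Θ`, the profit `π θ ·`
attains a maximum on the belief-compatible set. -/
def Admissible (ebar θl θh : ℝ) (π : ℝ → ℝ → ℝ) (d : ℝ → ℝ) : Prop :=
  ∀ θ ∈ Icc θl θh, ∃ e ∈ BCset ebar d, ∀ e' ∈ BCset ebar d, π θ e' ≤ π θ e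

/-- The maximized profit `π_d(θ)` of type `θ` under policy `d`. -/
def profitFn (ebar : ℝ) (π : ℝ → ℝ → ℝ) (d : ℝ → ℝ) (θ : ℝ) : ℝ :=
  sSup (π θ '' BCset ebar d)

/-- The equilibrium emission `γ_d(θ)`: the least maximizer of `π θ ·` on the
belief-compatible set. -/
def emissionFn (ebar : ℝ) (π : ℝ → ℝ → ℝ) (d : ℝ → ℝ) (θ : ℝ) : ℝ :=
  sInf {e | e ∈ BCset ebar d ∧ ∀ e' ∈ BCset ebar d, π θ e' ≤ π θ e}

/-- Expected profit `Π(d) = ∫ π_d(θ) f(θ) dθ`. -/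
def ExpProfit (ebar θl θh : ℝ) (π : ℝ → ℝ → ℝ) (f : ℝ → ℝ) (d : ℝ → ℝ) : ℝ :=
  ∫ θ in Icc θl θh, profitFn ebar π d θ * f θ

/-- Expected emission `Γ(d) = ∫ γ_d(θ) f(θ) dθ`. -/
def ExpEmission (ebar θl θh : ℝ) (π : ℝ → ℝ → ℝ) (f : ℝ → ℝ) (d : ℝ → ℝ) : ℝ :=
  ∫ θ in Icc θl θh, emissionFn ebar π d θ * f θ

/-- `d` is Pareto efficient: no admissible policy yields weakly higher expected
profit and weakly lower expected emission with at least one strict. -/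
def Efficient (ebar θl θh : ℝ) (π : ℝ → ℝ → ℝ) (f : ℝ → ℝ) (d : ℝ → ℝ) : Prop :=
  ¬ ∃ d' : ℝ → ℝ, Admissible ebar θl θh π d' ∧
      ExpProfit ebar θl θh π f d ≤ ExpProfit ebar θl θh π f d' ∧
      ExpEmission ebar θl θh π f d' ≤ ExpEmission ebar θl θh π f d ∧
      (ExpProfit ebar θl θh π f d < ExpProfit ebar θl θh π f d' ∨
        ExpEmission ebar θl θh π f d' < ExpEmission ebar θl θh π f d)

/-- A strictly concave function is strictly increasing to the left of a maximizer. -/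
lemma aux_strict_mono {ebar : ℝ} {f : ℝ → ℝ} (hconc : StrictConcaveOn ℝ (Icc 0 ebar) f)
    {m : ℝ} (hm : m ∈ Icc 0 ebar) (hmax : ∀ e ∈ Icc 0 ebar, f e ≤ f m)
    {a b : ℝ} (ha : a ∈ Icc 0 ebar) (hb : b ∈ Icc 0 ebar) (hab : a < b) (hbm : b ≤ m) :
    f a < f b := by
  rcases eq_or_lt_of_le hbm with rfl | hbm'
  · by_contra hle
    push_neg at hle
    have heq : f a = f b := le_antisymm (hmax a ha) hle
    have hmem : (1/2 : ℝ) • a + (1/2 : ℝ) • b ∈ Icc 0 ebar :=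
      hconc.1 ha hb (by norm_num) (by norm_num) (by norm_num)
    have hlt := hconc.2 ha hb hab.ne (by norm_num : (0:ℝ) < 1/2)
      (by norm_num : (0:ℝ) < 1/2) (by norm_num)
    have h2 := hmax _ hmem
    simp only [smul_eq_mul] at hlt h2
    rw [heq] at hlt
    linarith
  · have ham : a ≠ m := ne_of_lt (lt_trans hab hbm')
    have hden : (0:ℝ) < m - a := by linarith
    have h1 : (0:ℝ) < (m - b) / (m - a) := div_pos (by linarith) hden
    have h2 : (0:ℝ) < (b - a) / (m - a) := div_pos (by linarith) hden
    have h3 : (m - b) / (m - a) + (b - a) / (m - a) = 1 := by field_simp; ring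
    have ht : ((m - b) / (m - a)) • a + ((b - a) / (m - a)) • m = b := by
      simp only [smul_eq_mul]
      field_simp
      ring
    have hlt := hconc.2 ha hm ham h1 h2 h3
    rw [ht] at hlt
    simp only [smul_eq_mul] at hlt
    have hfm : f b ≤ f m := hmax b hb
    by_contra hc
    push_neg at hc
    have h4 : (m - b) / (m - a) * f b + (b - a) / (m - a) * f b = f b := by
      rw [← add_mul, h3, one_mul]
    have h5 := mul_le_mul_of_nonneg_left hc h1.le
    have h6 := mul_le_mul_of_nonneg_left hfm h2.le
    linarith

/-- the threshold policy with threshold `e*` has belief-compatible set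
`[0, e*] ∪ {ē}`, is admissible, and implements `min(ê(θ), e*)` for types with
`e̲(θ) ≤ e*` and `ē` for types with `e̲(θ) > e*`. -/
theorem threshold_policy_properties (ebar θl θh : ℝ) (hebar : 0 < ebar) (hθ : θl ≤ θh)
    (π : ℝ → ℝ → ℝ)
    (hcont : ContinuousOn (fun p : ℝ × ℝ => π p.1 p.2) (Icc θl θh ×ˢ Icc 0 ebar))
    (hconc : ∀ θ ∈ Icc θl θh, StrictConcaveOn ℝ (Icc 0 ebar) (π θ))
    (hIR : ∀ θ ∈ Icc θl θh, π θ 0 < π θ ebar)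
    (elow ehat : ℝ → ℝ)
    (helow : ∀ θ ∈ Icc θl θh,
        IsLeast {e ∈ Icc (0:ℝ) ebar | π θ ebar ≤ π θ e} (elow θ))
    (hehat : ∀ θ ∈ Icc θl θh, ehat θ ∈ Icc 0 ebar ∧
        (∀ e ∈ Icc 0 ebar, π θ e ≤ π θ (ehat θ)) ∧
        (∀ e ∈ Icc 0 ebar, (∀ e' ∈ Icc 0 ebar, π θ e' ≤ π θ e) → e = ehat θ))
    (estar : ℝ) (hestar : estar ∈ Icc 0 ebar) :
    BCset ebar (fun e => if e ≤ estar then e else ebar) = Icc 0 estar ∪ {ebar} ∧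
      Admissible ebar θl θh π (fun e => if e ≤ estar then e else ebar) ∧
      ∀ θ ∈ Icc θl θh,
        (elow θ ≤ estar →
          emissionFn ebar π (fun e => if e ≤ estar then e else ebar) θ
            = min (ehat θ) estar) ∧
        (estar < elow θ →
          emissionFn ebar π (fun e => if e ≤ estar then e else ebar) θ = ebar) := by
  classical
  set d : ℝ → ℝ := fun e => if e ≤ estar then e else ebar with hd
  have hdbar : d ebar = ebar := by
    simp only [hd]; split <;> rfl
  have hSsub : Icc 0 estar ∪ {ebar} ⊆ Icc (0:ℝ) ebar := by
    rintro e (he | he)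
    · exact ⟨he.1, he.2.trans hestar.2⟩
    · rw [mem_singleton_iff] at he
      subst he
      exact ⟨hebar.le, le_rfl⟩
  have hBC : BCset ebar d = Icc 0 estar ∪ {ebar} := by
    ext e
    constructor
    · rintro ⟨heI, hbc⟩
      by_cases he : e ≤ estar
      · exact Or.inl ⟨heI.1, he⟩
      · right
        rw [mem_singleton_iff]
        have hde : d e = ebar := if_neg he
        have := hbc ebar ⟨hebar.le, le_rfl⟩ (by rw [hdbar, hde])
        exact le_antisymm heI.2 this
    · rintro (he | he)
      · refine ⟨⟨he.1, he.2.trans hestar.2⟩, fun e' he' hde' => ?_⟩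
        have hde : d e = e := if_pos he.2
        rw [hde] at hde'
        by_cases h' : e' ≤ estar
        · rw [show d e' = e' from if_pos h'] at hde'
          exact hde'.le
        · rw [show d e' = ebar from if_neg h'] at hde'
          exact (hde' ▸ he'.2 : e' ≤ e)
      · rw [mem_singleton_iff] at he
        subst he
        exact ⟨⟨hebar.le, le_rfl⟩, fun e' he' _ => he'.2⟩
  have hScpt : IsCompact (Icc (0:ℝ) estar ∪ {ebar}) :=
    isCompact_Icc.union isCompact_singleton
  have hSne : (Icc (0:ℝ) estar ∪ {ebar}).Nonempty := ⟨ebar, Or.inr rfl⟩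
  have hcontθ : ∀ θ ∈ Icc θl θh, ContinuousOn (π θ) (Icc 0 ebar) := by
    intro θ hθm
    have : ContinuousOn (fun e : ℝ => π (θ, e).1 (θ, e).2) (Icc 0 ebar) :=
      hcont.comp (Continuous.continuousOn (Continuous.prodMk_right θ)) (fun e he => ⟨hθm, he⟩)
    exact this
  have hAdm : Admissible ebar θl θh π d := by
    intro θ hθm
    obtain ⟨e, heS, hemax⟩ := hScpt.exists_isMaxOn hSne ((hcontθ θ hθm).mono hSsub)
    rw [hBC]
    exact ⟨e, heS, fun e' he' => hemax he'⟩
  refine ⟨hBC, hAdm, fun θ hθm => ?_⟩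
  have hcθ := hconc θ hθm
  obtain ⟨hhatI, hhatmax, hhatuniq⟩ := hehat θ hθm
  obtain ⟨⟨hlowI, hlowπ⟩, hlowlb⟩ := helow θ hθm
  have hbarS : ebar ∈ Icc (0:ℝ) estar ∪ {ebar} := Or.inr rfl
  have hstarS : estar ∈ Icc (0:ℝ) estar ∪ {ebar} := Or.inl ⟨hestar.1, le_rfl⟩
  have hEF : emissionFn ebar π d θ =
      sInf {e | e ∈ Icc 0 estar ∪ {ebar} ∧
        ∀ e' ∈ Icc 0 estar ∪ {ebar}, π θ e' ≤ π θ e} := by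
    rw [emissionFn, hBC]
  constructor
  · intro hle
    rcases le_or_gt (ehat θ) estar with hcase | hcase
    · -- `ehat θ ≤ estar` : least maximizer is `ehat θ`
      rw [min_eq_left hcase, hEF]
      have hhatS : ehat θ ∈ Icc (0:ℝ) estar ∪ {ebar} := Or.inl ⟨hhatI.1, hcase⟩
      refine IsLeast.csInf_eq ⟨⟨hhatS, fun e' he' => hhatmax e' (hSsub he')⟩, ?_⟩
      rintro e ⟨heS, hemax⟩
      have heI : e ∈ Icc (0:ℝ) ebar := hSsub heS
      have : e = ehat θ := by
        refine hhatuniq e heI (fun e' he' => ?_)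
        calc π θ e' ≤ π θ (ehat θ) := hhatmax e' he'
          _ ≤ π θ e := hemax (ehat θ) hhatS
      exact this.ge
    · -- `estar < ehat θ` : least maximizer is `estar`
      rw [min_eq_right hcase.le, hEF]
      have hstarI : estar ∈ Icc (0:ℝ) ebar := hestar
      have hstarmax : ∀ e' ∈ Icc (0:ℝ) estar ∪ {ebar}, π θ e' ≤ π θ estar := by
        rintro e' (he' | he')
        · rcases lt_or_eq_of_le he'.2 with h | h
          · exact (aux_strict_mono hcθ hhatI hhatmax
              ⟨he'.1, he'.2.trans hestar.2⟩ hstarI h hcase.le).le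
          · rw [h]
        · rw [mem_singleton_iff] at he'
          subst he'
          have h1 : π θ (elow θ) ≤ π θ estar := by
            rcases lt_or_eq_of_le hle with h | h
            · exact (aux_strict_mono hcθ hhatI hhatmax hlowI hstarI h hcase.le).le
            · rw [h]
          exact hlowπ.trans h1
      refine IsLeast.csInf_eq ⟨⟨hstarS, hstarmax⟩, ?_⟩
      rintro e ⟨heS, hemax⟩
      rcases heS with he | he
      · rcases lt_or_eq_of_le he.2 with h | h
        · exfalso
          have h1 : π θ e < π θ estar := aux_strict_mono hcθ hhatI hhatmax
            ⟨he.1, he.2.trans hestar.2⟩ hstarI h hcase.le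
          exact absurd (hemax estar hstarS) (not_le.mpr h1)
        · exact h.ge
      · rw [mem_singleton_iff] at he
        exact he ▸ hestar.2
  · intro hgt
    rw [hEF]
    have hstrict : ∀ e' ∈ Icc (0:ℝ) estar, π θ e' < π θ ebar := by
      intro e' he'
      by_contra h
      push_neg at h
      have : elow θ ≤ e' := hlowlb ⟨⟨he'.1, he'.2.trans hestar.2⟩, h⟩
      linarith [he'.2]
    have hbarmax : ∀ e' ∈ Icc (0:ℝ) estar ∪ {ebar}, π θ e' ≤ π θ ebar := by
      rintro e' (he' | he')
      · exact (hstrict e' he').le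
      · rw [mem_singleton_iff] at he'
        exact he' ▸ le_rfl
    refine IsLeast.csInf_eq ⟨⟨hbarS, hbarmax⟩, ?_⟩
    rintro e ⟨heS, hemax⟩
    rcases heS with he | he
    · exact absurd (hemax ebar hbarS) (not_le.mpr (hstrict e he))
    · rw [mem_singleton_iff] at he
      exact he.ge
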